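/- (Steering cost bound for policy-incentivizing rewards.) Let π^1, ..., π^T be Markov policies (possibly repeating), and μ̄^1, ..., μ̄^T occupancy measures in a fixed model with μ^{π^t} the occupancy of π^t. With R_π(μ) = −μᵀ(W^π−I)ᵀ(W^π−I) and R^t(μ) = R_{π^t}(μ) + ‖R_{π^t}(μ)‖_∞·1, the cumulative steering cost satisfies Σ_{t=1}^T ⟨R^t(μ̄^t), μ̄^t⟩ ≤ 4H·sqrt( T · Σ_{t=1}^T ⟨R_{π^t}(μ̄^t), μ^{π^t} − μ̄^t⟩ ). -/
import Mathlib


open Finset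

def IsPolicy {S A : Type*} [Fintype A] (π : ℕ → S → A → ℝ) : Prop :=
  ∀ h s, (∀ a, 0 ≤ π h s a) ∧ ∑ a, π h s a = 1

def IsKernel {S A : Type*} [Fintype S] (P : ℕ → S → A → S → ℝ) : Prop :=
  ∀ h s a, (∀ s', 0 ≤ P h s a s') ∧ ∑ s', P h s a s' = 1

def IsProb {S : Type*} [Fintype S] (μ₁ : S → ℝ) : Prop :=
  (∀ s, 0 ≤ μ₁ s) ∧ ∑ s, μ₁ s = 1

noncomputable def occ {S A : Type*} [Fintype S] [Fintype A] (μ₁ : S → ℝ)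
    (P : ℕ → S → A → S → ℝ) (π : ℕ → S → A → ℝ) : ℕ → S → A → ℝ
  | 0 => fun s a => μ₁ s * π 0 s a
  | (h+1) => fun s a => π (h+1) s a * ∑ s', ∑ a', P h s' a' s * occ μ₁ P π h s' a'


noncomputable def Rpi {S A : Type*} [Fintype A] [DecidableEq A]
    (π : ℕ → S → A → ℝ) (μ : ℕ → S → A → ℝ) (h : ℕ) (s : S) (a : A) : ℝ :=
  - ∑ a', (π h s a' * (∑ b, μ h s b) - μ h s a') * (π h s a' - if a' = a then 1 else 0)

section Aux

variable {S A : Type*} [Fintype S] [Fintype A] [DecidableEq A]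

/-- `vv` is the vector `(W^π - I) μ`. -/
noncomputable def vv (π μ : ℕ → S → A → ℝ) (h : ℕ) (s : S) (a : A) : ℝ :=
  π h s a * (∑ b, μ h s b) - μ h s a

lemma Rpi_eq (π μ : ℕ → S → A → ℝ) (h : ℕ) (s : S) (a : A) :
    Rpi π μ h s a = vv π μ h s a - ∑ a', π h s a' * vv π μ h s a' := by
  unfold Rpi vv
  have e : ∀ a' ∈ (univ : Finset A),
      (π h s a' * (∑ b, μ h s b) - μ h s a') * (π h s a' - if a' = a then 1 else 0)
      = π h s a' * (π h s a' * (∑ b, μ h s b) - μ h s a')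
        - (if a' = a then (π h s a' * (∑ b, μ h s b) - μ h s a') else 0) := by
    intro a' _; split_ifs <;> ring
  rw [Finset.sum_congr rfl e, Finset.sum_sub_distrib, Finset.sum_ite_eq' univ a
    (fun a' => π h s a' * (∑ b, μ h s b) - μ h s a')]
  simp only [Finset.mem_univ, if_true]
  ring

lemma alg_mu (p m v : A → ℝ) (hv : ∀ a, v a = p a * (∑ b, m b) - m a) :
    ∑ a, (v a - ∑ a', p a' * v a') * m a = - ∑ a, (v a) ^ 2 := by
  have h1 : ∑ a, (v a - ∑ a', p a' * v a') * m a
      = (∑ a, v a * m a) - (∑ a', p a' * v a') * (∑ b, m b) := by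
    simp only [sub_mul, Finset.sum_sub_distrib, ← Finset.mul_sum]
  have h2 : ∑ a, (v a) ^ 2
      = (∑ a', p a' * v a') * (∑ b, m b) - ∑ a, v a * m a := by
    have e : ∀ a, (v a) ^ 2 = (p a * v a) * (∑ b, m b) - v a * m a := by
      intro a; rw [hv a]; ring
    rw [Finset.sum_congr rfl (fun a _ => e a), Finset.sum_sub_distrib, ← Finset.sum_mul]
  rw [h1, h2]; ring

lemma alg_pi (p v : A → ℝ) (g : ℝ) (hp : ∑ a, p a = 1) :
    ∑ a, (v a - ∑ a', p a' * v a') * (p a * g) = 0 := by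
  have e : ∀ a, (v a - ∑ a', p a' * v a') * (p a * g)
      = (p a * v a) * g - ((∑ a', p a' * v a') * g) * p a := by
    intro a; ring
  rw [Finset.sum_congr rfl (fun a _ => e a), Finset.sum_sub_distrib, ← Finset.sum_mul,
    ← Finset.mul_sum, hp]
  ring

lemma occ_pi_form (μ₁ : S → ℝ) (P : ℕ → S → A → S → ℝ) (π : ℕ → S → A → ℝ)
    (h : ℕ) (s : S) : ∃ g : ℝ, ∀ a, occ μ₁ P π h s a = π h s a * g := by
  cases h with
  | zero => exact ⟨μ₁ s, fun a => mul_comm _ _⟩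
  | succ n => exact ⟨_, fun a => rfl⟩

lemma occ_sum (μ₁ : S → ℝ) (P : ℕ → S → A → S → ℝ) (π : ℕ → S → A → ℝ)
    (hμ₁ : IsProb μ₁) (hP : IsKernel P) (hπ : IsPolicy π) :
    ∀ h, ∑ s, ∑ a, occ μ₁ P π h s a = 1 := by
  intro h
  induction h with
  | zero =>
    show ∑ s, ∑ a, μ₁ s * π 0 s a = 1
    calc ∑ s, ∑ a, μ₁ s * π 0 s a = ∑ s, μ₁ s * ∑ a, π 0 s a := by
          simp [Finset.mul_sum]
      _ = ∑ s, μ₁ s := by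
          refine Finset.sum_congr rfl fun s _ => by rw [(hπ 0 s).2, mul_one]
      _ = 1 := hμ₁.2
  | succ n ih =>
    show ∑ s, ∑ a, π (n+1) s a * ∑ s', ∑ a', P n s' a' s * occ μ₁ P π n s' a' = 1
    calc ∑ s, ∑ a, π (n+1) s a * ∑ s', ∑ a', P n s' a' s * occ μ₁ P π n s' a'
        = ∑ s, (∑ a, π (n+1) s a) * ∑ s', ∑ a', P n s' a' s * occ μ₁ P π n s' a' := by
          simp [Finset.sum_mul]
      _ = ∑ s, ∑ s', ∑ a', P n s' a' s * occ μ₁ P π n s' a' := by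
          refine Finset.sum_congr rfl fun s _ => by rw [(hπ (n+1) s).2, one_mul]
      _ = ∑ s', ∑ a', (occ μ₁ P π n s' a') * ∑ s, P n s' a' s := by
          rw [Finset.sum_comm]
          refine Finset.sum_congr rfl fun s' _ => ?_
          rw [Finset.sum_comm]
          refine Finset.sum_congr rfl fun a' _ => ?_
          rw [Finset.mul_sum]
          exact Finset.sum_congr rfl fun s _ => mul_comm _ _
      _ = ∑ s', ∑ a', occ μ₁ P π n s' a' := by
          refine Finset.sum_congr rfl fun s' _ => Finset.sum_congr rfl fun a' _ => by
            rw [(hP n s' a').2, mul_one]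
      _ = 1 := ih

end Aux

/-- Steering cost bound for policy-incentivizing rewards: with
`R^t(μ) = R_{π^t}(μ) + ‖R_{π^t}(μ)‖_∞·1`, the cumulative steering cost is at most
`4H·sqrt(T · Σ_t ⟨R_{π^t}(μ̄^t), μ^{π^t} − μ̄^t⟩)`. -/
theorem stmt17 {S A : Type*} [Fintype S] [Fintype A] [Nonempty S] [Nonempty A]
    [DecidableEq A]
    (H T : ℕ) (hH : 0 < H) (μ₁ : S → ℝ) (hμ₁ : IsProb μ₁)
    (P : ℕ → S → A → S → ℝ) (hP : IsKernel P)
    (πt : ℕ → ℕ → S → A → ℝ) (hπt : ∀ t, IsPolicy (πt t))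
    (ρ : ℕ → ℕ → S → A → ℝ) (hρ : ∀ t, IsPolicy (ρ t))
    (μb : ℕ → ℕ → S → A → ℝ) (hμb : ∀ t, μb t = occ μ₁ P (ρ t)) :
    let Rinf : ℕ → ℝ := fun t => ⨆ p : Fin H × S × A, |Rpi (πt t) (μb t) p.1 p.2.1 p.2.2|
    ∑ t ∈ Finset.range T, ∑ h ∈ Finset.range H, ∑ s, ∑ a,
        (Rpi (πt t) (μb t) h s a + Rinf t) * μb t h s a ≤
      4 * H * Real.sqrt ((T : ℝ) *
        ∑ t ∈ Finset.range T, ∑ h ∈ Finset.range H, ∑ s, ∑ a,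
          Rpi (πt t) (μb t) h s a * (occ μ₁ P (πt t) h s a - μb t h s a)) := by
  intro Rinf
  classical
  set E : ℕ → ℝ := fun t => ∑ h ∈ Finset.range H, ∑ s, ∑ a,
    (vv (πt t) (μb t) h s a) ^ 2 with hEdef
  have hEnn : ∀ t, 0 ≤ E t := by
    intro t; rw [hEdef]; positivity
  -- ⟨R, μ̄⟩ = -E
  have hmu_inner : ∀ t h s, ∑ a, Rpi (πt t) (μb t) h s a * μb t h s a
      = - ∑ a, (vv (πt t) (μb t) h s a) ^ 2 := by
    intro t h s
    have := alg_mu (fun a => πt t h s a) (fun a => μb t h s a)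
      (fun a => vv (πt t) (μb t) h s a) (fun a => rfl)
    simpa [Rpi_eq] using this
  have hmu_sum : ∀ t, ∑ h ∈ Finset.range H, ∑ s, ∑ a,
      Rpi (πt t) (μb t) h s a * μb t h s a = - E t := by
    intro t
    rw [hEdef]
    simp only [hmu_inner, Finset.sum_neg_distrib]
  -- ⟨R, μ^π⟩ = 0
  have hpi_sum : ∀ t, ∑ h ∈ Finset.range H, ∑ s, ∑ a,
      Rpi (πt t) (μb t) h s a * occ μ₁ P (πt t) h s a = 0 := by
    intro t
    refine Finset.sum_eq_zero fun h _ => Finset.sum_eq_zero fun s _ => ?_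
    obtain ⟨g, hg⟩ := occ_pi_form μ₁ P (πt t) h s
    calc ∑ a, Rpi (πt t) (μb t) h s a * occ μ₁ P (πt t) h s a
        = ∑ a, (vv (πt t) (μb t) h s a - ∑ a', πt t h s a' * vv (πt t) (μb t) h s a')
            * (πt t h s a * g) := by
          refine Finset.sum_congr rfl fun a _ => by rw [Rpi_eq, hg]
      _ = 0 := alg_pi (fun a => πt t h s a) (fun a => vv (πt t) (μb t) h s a) g
          (hπt t h s).2
  -- mass of μ̄ per layer
  have hmass : ∀ t h, ∑ s, ∑ a, μb t h s a = 1 := by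
    intro t h
    rw [hμb t]
    exact occ_sum μ₁ P (ρ t) hμ₁ hP (hρ t) h
  -- Rinf bound
  have hRinf_le : ∀ t, Rinf t ≤ 2 * Real.sqrt (E t) := by
    intro t
    haveI : Nonempty (Fin H) := ⟨⟨0, hH⟩⟩
    refine ciSup_le fun p => ?_
    obtain ⟨h, s, a⟩ := p
    have hvb : ∀ a', |vv (πt t) (μb t) h.1 s a'| ≤ Real.sqrt (E t) := by
      intro a'
      refine Real.abs_le_sqrt ?_
      calc (vv (πt t) (μb t) h.1 s a') ^ 2
          ≤ ∑ b, (vv (πt t) (μb t) h.1 s b) ^ 2 :=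
            Finset.single_le_sum (f := fun b => (vv (πt t) (μb t) h.1 s b) ^ 2)
              (fun i _ => sq_nonneg _) (Finset.mem_univ a')
        _ ≤ ∑ s', ∑ b, (vv (πt t) (μb t) h.1 s' b) ^ 2 :=
            Finset.single_le_sum (f := fun s' => ∑ b, (vv (πt t) (μb t) h.1 s' b) ^ 2)
              (fun i _ => by positivity) (Finset.mem_univ s)
        _ ≤ E t := by
            rw [hEdef]
            exact Finset.single_le_sum
              (f := fun h' => ∑ s', ∑ b, (vv (πt t) (μb t) h' s' b) ^ 2)
              (fun i _ => by positivity) (Finset.mem_range.mpr h.2)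
    rw [Rpi_eq]
    have habs : |∑ a', πt t h.1 s a' * vv (πt t) (μb t) h.1 s a'| ≤ Real.sqrt (E t) := by
      calc |∑ a', πt t h.1 s a' * vv (πt t) (μb t) h.1 s a'|
          ≤ ∑ a', |πt t h.1 s a' * vv (πt t) (μb t) h.1 s a'| :=
            Finset.abs_sum_le_sum_abs _ _
        _ ≤ ∑ a', πt t h.1 s a' * Real.sqrt (E t) := by
            refine Finset.sum_le_sum fun a' _ => ?_
            rw [abs_mul, abs_of_nonneg ((hπt t h.1 s).1 a')]
            exact mul_le_mul_of_nonneg_left (hvb a') ((hπt t h.1 s).1 a')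
        _ = Real.sqrt (E t) := by
            rw [← Finset.sum_mul, (hπt t h.1 s).2, one_mul]
    calc |vv (πt t) (μb t) h.1 s a - ∑ a', πt t h.1 s a' * vv (πt t) (μb t) h.1 s a'|
        ≤ |vv (πt t) (μb t) h.1 s a|
          + |∑ a', πt t h.1 s a' * vv (πt t) (μb t) h.1 s a'| := abs_sub _ _
      _ ≤ Real.sqrt (E t) + Real.sqrt (E t) := add_le_add (hvb a) habs
      _ = 2 * Real.sqrt (E t) := by ring
  -- LHS per t
  have hLHS : ∀ t, ∑ h ∈ Finset.range H, ∑ s, ∑ a,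
      (Rpi (πt t) (μb t) h s a + Rinf t) * μb t h s a
      = - E t + Rinf t * H := by
    intro t
    have : ∀ h ∈ Finset.range H, ∑ s, ∑ a,
        (Rpi (πt t) (μb t) h s a + Rinf t) * μb t h s a
        = (∑ s, ∑ a, Rpi (πt t) (μb t) h s a * μb t h s a) + Rinf t := by
      intro h _
      have : ∑ s, ∑ a, (Rpi (πt t) (μb t) h s a + Rinf t) * μb t h s a
          = (∑ s, ∑ a, Rpi (πt t) (μb t) h s a * μb t h s a)
            + Rinf t * (∑ s, ∑ a, μb t h s a) := by
        simp only [add_mul, Finset.sum_add_distrib, Finset.mul_sum]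
      rw [this, hmass t h, mul_one]
    rw [Finset.sum_congr rfl this, Finset.sum_add_distrib, hmu_sum t,
      Finset.sum_const, Finset.card_range, nsmul_eq_mul, mul_comm]
  -- per-t bound
  have key : ∀ t, ∑ h ∈ Finset.range H, ∑ s, ∑ a,
      (Rpi (πt t) (μb t) h s a + Rinf t) * μb t h s a ≤ 2 * H * Real.sqrt (E t) := by
    intro t
    rw [hLHS t]
    have h1 := hRinf_le t
    have h2 := hEnn t
    have h3 : (0:ℝ) ≤ H := Nat.cast_nonneg H
    nlinarith [Real.sqrt_nonneg (E t)]
  -- RHS inner sum equals ∑ E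
  have rhs_eq : ∑ t ∈ Finset.range T, ∑ h ∈ Finset.range H, ∑ s, ∑ a,
      Rpi (πt t) (μb t) h s a * (occ μ₁ P (πt t) h s a - μb t h s a)
      = ∑ t ∈ Finset.range T, E t := by
    refine Finset.sum_congr rfl fun t _ => ?_
    have : ∑ h ∈ Finset.range H, ∑ s, ∑ a,
        Rpi (πt t) (μb t) h s a * (occ μ₁ P (πt t) h s a - μb t h s a)
        = (∑ h ∈ Finset.range H, ∑ s, ∑ a,
            Rpi (πt t) (μb t) h s a * occ μ₁ P (πt t) h s a)
          - ∑ h ∈ Finset.range H, ∑ s, ∑ a,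
            Rpi (πt t) (μb t) h s a * μb t h s a := by
      simp only [mul_sub, Finset.sum_sub_distrib]
    rw [this, hpi_sum t, hmu_sum t]
    ring
  -- Cauchy–Schwarz
  have hsum_sqrt : ∑ t ∈ Finset.range T, Real.sqrt (E t)
      ≤ Real.sqrt ((T : ℝ) * ∑ t ∈ Finset.range T, E t) := by
    have cs := Finset.sum_mul_sq_le_sq_mul_sq (Finset.range T)
      (fun _ => (1:ℝ)) (fun t => Real.sqrt (E t))
    simp only [one_mul, one_pow, Finset.sum_const, Finset.card_range,
      nsmul_eq_mul, mul_one] at cs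
    have cs' : (∑ t ∈ Finset.range T, Real.sqrt (E t)) ^ 2
        ≤ (T : ℝ) * ∑ t ∈ Finset.range T, E t := by
      calc (∑ t ∈ Finset.range T, Real.sqrt (E t)) ^ 2
          ≤ (T : ℝ) * ∑ t ∈ Finset.range T, Real.sqrt (E t) ^ 2 := cs
        _ = (T : ℝ) * ∑ t ∈ Finset.range T, E t := by
            congr 1
            exact Finset.sum_congr rfl fun t _ => Real.sq_sqrt (hEnn t)
    have hnn : 0 ≤ ∑ t ∈ Finset.range T, Real.sqrt (E t) :=
      Finset.sum_nonneg fun t _ => Real.sqrt_nonneg _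
    calc ∑ t ∈ Finset.range T, Real.sqrt (E t)
        = Real.sqrt ((∑ t ∈ Finset.range T, Real.sqrt (E t)) ^ 2) := by
          rw [Real.sqrt_sq hnn]
      _ ≤ Real.sqrt ((T : ℝ) * ∑ t ∈ Finset.range T, E t) := Real.sqrt_le_sqrt cs'
  -- assemble
  calc ∑ t ∈ Finset.range T, ∑ h ∈ Finset.range H, ∑ s, ∑ a,
        (Rpi (πt t) (μb t) h s a + Rinf t) * μb t h s a
      ≤ ∑ t ∈ Finset.range T, 2 * H * Real.sqrt (E t) :=
        Finset.sum_le_sum fun t _ => key t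
    _ = 2 * H * ∑ t ∈ Finset.range T, Real.sqrt (E t) := by rw [← Finset.mul_sum]
    _ ≤ 2 * H * Real.sqrt ((T : ℝ) * ∑ t ∈ Finset.range T, E t) := by
        refine mul_le_mul_of_nonneg_left hsum_sqrt ?_
        positivity
    _ ≤ 4 * H * Real.sqrt ((T : ℝ) * ∑ t ∈ Finset.range T, E t) := by
        have := Real.sqrt_nonneg ((T : ℝ) * ∑ t ∈ Finset.range T, E t)
        have h3 : (0:ℝ) ≤ H := Nat.cast_nonneg H
        nlinarith
    _ = 4 * H * Real.sqrt ((T : ℝ) *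
        ∑ t ∈ Finset.range T, ∑ h ∈ Finset.range H, ∑ s, ∑ a,
          Rpi (πt t) (μb t) h s a * (occ μ₁ P (πt t) h s a - μb t h s a)) := by
        rw [rhs_eq]
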